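/- With the setup of the biased inner-product estimator (u, v nonzero vectors, ε ∈ [0,1], p̃ within total variation ε of p_u, Γ = {i : |v(i)| ≥ (ṽ/(√(2ε)‖u‖))|u(i)|} with ṽ ≥ ‖v‖, and X defined by sampling i ~ p̃ and outputting 0 if i ∈ Γ and v(i)*‖u‖²/u(i)* otherwise), the variance of X satisfies Var[X] ≤ E[|X|²] ≤ 2‖u‖²ṽ². -/

import Mathlib

open Finset

set_option maxHeartbeats 2000000 in
/-- **Robust inner product estimator, variance bound.**
With the setup of the biased inner-product estimator (`u`, `v` nonzero, `ε ∈ [0,1]`,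
`p̃` within total variation `ε` of `p_u`, `Γ = {i : |v i| ≥ (ṽ/(√(2ε)‖u‖))|u i|}` with
`ṽ ≥ ‖v‖`, and `X` sampling `i ~ p̃`, outputting `0` on `Γ` and `v(i)*‖u‖²/u(i)*` otherwise),
one has `Var[X] ≤ E[|X|²] ≤ 2‖u‖²ṽ²`. -/
theorem robust_inner_product_variance
    (n : ℕ) (u v : Fin n → ℂ) (hu : u ≠ 0) (hv : v ≠ 0)
    (ε : ℝ) (hε : ε ∈ Set.Icc (0:ℝ) 1)
    (ptilde : Fin n → ℝ)
    (hpt_nonneg : ∀ i, 0 ≤ ptilde i) (hpt_sum : ∑ i, ptilde i = 1)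
    (nu : ℝ) (hnu : nu = Real.sqrt (∑ i, ‖u i‖ ^ 2))
    (hTV : (1/2) * ∑ i, |ptilde i - ‖u i‖ ^ 2 / nu ^ 2| ≤ ε)
    (vtilde : ℝ) (hvtilde : Real.sqrt (∑ i, ‖v i‖ ^ 2) ≤ vtilde)
    (EX : ℂ)
    (hEX : EX = ∑ i, if vtilde * ‖u i‖ ≤ Real.sqrt (2 * ε) * nu * ‖v i‖ then (0:ℂ)
        else (ptilde i : ℂ) * ((starRingEnd ℂ) (v i) * (nu:ℂ) ^ 2 / (starRingEnd ℂ) (u i)))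
    (EX2 : ℝ)
    (hEX2 : EX2 = ∑ i, if vtilde * ‖u i‖ ≤ Real.sqrt (2 * ε) * nu * ‖v i‖ then (0:ℝ)
        else ptilde i * ‖(starRingEnd ℂ) (v i) * (nu:ℂ) ^ 2 / (starRingEnd ℂ) (u i)‖ ^ 2) :
    EX2 - ‖EX‖ ^ 2 ≤ EX2 ∧ EX2 ≤ 2 * nu ^ 2 * vtilde ^ 2 := by
  obtain ⟨hε0, hε1⟩ := hε
  refine ⟨by nlinarith [sq_nonneg ‖EX‖], ?_⟩
  -- basic positivity facts
  have husum : 0 < ∑ i, ‖u i‖ ^ 2 := by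
    obtain ⟨i, hi⟩ := Function.ne_iff.mp hu
    exact Finset.sum_pos' (fun j _ => by positivity) ⟨i, Finset.mem_univ i, pow_pos (norm_pos_iff.mpr hi) 2⟩
  have hnupos : 0 < nu := by rw [hnu]; exact Real.sqrt_pos.mpr husum
  have hnusq : nu ^ 2 = ∑ i, ‖u i‖ ^ 2 := by rw [hnu]; exact Real.sq_sqrt husum.le
  have hvpos : 0 < vtilde := by
    obtain ⟨i, hi⟩ := Function.ne_iff.mp hv
    have h2 : 0 < ∑ i, ‖v i‖ ^ 2 :=
      Finset.sum_pos' (fun j _ => by positivity) ⟨i, Finset.mem_univ i, pow_pos (norm_pos_iff.mpr hi) 2⟩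
    exact lt_of_lt_of_le (Real.sqrt_pos.mpr h2) hvtilde
  have hvsum : ∑ i, ‖v i‖ ^ 2 ≤ vtilde ^ 2 := by
    have h2 := mul_self_le_mul_self (Real.sqrt_nonneg (∑ i, ‖v i‖ ^ 2)) hvtilde
    rw [Real.mul_self_sqrt (by positivity)] at h2
    nlinarith
  -- norm of the term
  have hT : ∀ i, ‖(starRingEnd ℂ) (v i) * (nu:ℂ) ^ 2 / (starRingEnd ℂ) (u i)‖ ^ 2
      = (‖v i‖ * nu ^ 2 / ‖u i‖) ^ 2 := by
    intro i
    rw [norm_div, norm_mul, norm_pow, Complex.norm_real, RCLike.norm_conj, RCLike.norm_conj,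
      Real.norm_of_nonneg hnupos.le]
  -- on the complement of Γ, u i ≠ 0
  have hune : ∀ i, ¬ (vtilde * ‖u i‖ ≤ Real.sqrt (2 * ε) * nu * ‖v i‖) → ‖u i‖ ≠ 0 := by
    intro i h h0
    apply h
    rw [h0, mul_zero]
    positivity
  -- termwise bound
  have hterm : ∀ i, (if vtilde * ‖u i‖ ≤ Real.sqrt (2 * ε) * nu * ‖v i‖ then (0:ℝ)
        else ptilde i * ‖(starRingEnd ℂ) (v i) * (nu:ℂ) ^ 2 / (starRingEnd ℂ) (u i)‖ ^ 2)
      ≤ nu ^ 2 * ‖v i‖ ^ 2 +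
        (if vtilde * ‖u i‖ ≤ Real.sqrt (2 * ε) * nu * ‖v i‖ then (0:ℝ)
          else |ptilde i - ‖u i‖ ^ 2 / nu ^ 2| * (‖v i‖ * nu ^ 2 / ‖u i‖) ^ 2) := by
    intro i
    split_ifs with h
    · positivity
    · rw [hT i]
      have hu0 : ‖u i‖ ≠ 0 := hune i h
      have hpt : ptilde i ≤ ‖u i‖ ^ 2 / nu ^ 2 + |ptilde i - ‖u i‖ ^ 2 / nu ^ 2| := by
        have := abs_le.mp (le_refl |ptilde i - ‖u i‖ ^ 2 / nu ^ 2|)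
        nlinarith [neg_abs_le (ptilde i - ‖u i‖ ^ 2 / nu ^ 2),
          le_abs_self (ptilde i - ‖u i‖ ^ 2 / nu ^ 2)]
      have hTnn : (0:ℝ) ≤ (‖v i‖ * nu ^ 2 / ‖u i‖) ^ 2 := by positivity
      have h1 : ptilde i * (‖v i‖ * nu ^ 2 / ‖u i‖) ^ 2
          ≤ (‖u i‖ ^ 2 / nu ^ 2) * (‖v i‖ * nu ^ 2 / ‖u i‖) ^ 2
            + |ptilde i - ‖u i‖ ^ 2 / nu ^ 2| * (‖v i‖ * nu ^ 2 / ‖u i‖) ^ 2 := by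
        nlinarith
      have h2 : (‖u i‖ ^ 2 / nu ^ 2) * (‖v i‖ * nu ^ 2 / ‖u i‖) ^ 2 = nu ^ 2 * ‖v i‖ ^ 2 := by
        have hA : ‖u i‖ ≠ 0 := hu0
        have hB : nu ≠ 0 := hnupos.ne'
        generalize ‖u i‖ = A at hA ⊢
        generalize ‖v i‖ = B
        field_simp
      linarith [h1, h2.le]
  -- error sum bound
  have herr : (∑ i, if vtilde * ‖u i‖ ≤ Real.sqrt (2 * ε) * nu * ‖v i‖ then (0:ℝ)
        else |ptilde i - ‖u i‖ ^ 2 / nu ^ 2| * (‖v i‖ * nu ^ 2 / ‖u i‖) ^ 2)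
      ≤ nu ^ 2 * vtilde ^ 2 := by
    rcases eq_or_lt_of_le hε0 with hez | hep
    · -- ε = 0 : all deviations vanish
      have hall : ∀ i ∈ Finset.univ, |ptilde i - ‖u i‖ ^ 2 / nu ^ 2| = 0 := by
        have hs : ∑ i, |ptilde i - ‖u i‖ ^ 2 / nu ^ 2| ≤ 0 := by linarith [hTV, hez]
        intro i _
        have := Finset.sum_nonneg (fun j (_ : j ∈ Finset.univ) =>
          abs_nonneg (ptilde j - ‖u j‖ ^ 2 / nu ^ 2))
        have hs0 : ∑ i, |ptilde i - ‖u i‖ ^ 2 / nu ^ 2| = 0 := le_antisymm hs this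
        exact (Finset.sum_eq_zero_iff_of_nonneg (fun j _ => abs_nonneg _)).mp hs0 i
          (Finset.mem_univ i)
      have : (∑ i, if vtilde * ‖u i‖ ≤ Real.sqrt (2 * ε) * nu * ‖v i‖ then (0:ℝ)
          else |ptilde i - ‖u i‖ ^ 2 / nu ^ 2| * (‖v i‖ * nu ^ 2 / ‖u i‖) ^ 2) = 0 := by
        apply Finset.sum_eq_zero
        intro i hi
        split_ifs with h
        · rfl
        · rw [hall i hi, zero_mul]
      rw [this]; positivity
    · -- ε > 0
      have hkey : ∀ i, (if vtilde * ‖u i‖ ≤ Real.sqrt (2 * ε) * nu * ‖v i‖ then (0:ℝ)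
          else |ptilde i - ‖u i‖ ^ 2 / nu ^ 2| * (‖v i‖ * nu ^ 2 / ‖u i‖) ^ 2)
          ≤ |ptilde i - ‖u i‖ ^ 2 / nu ^ 2| * (nu ^ 2 * vtilde ^ 2 / (2 * ε)) := by
        intro i
        split_ifs with h
        · positivity
        · have hu0 : (0:ℝ) < ‖u i‖ := lt_of_le_of_ne (norm_nonneg _) (Ne.symm (hune i h))
          push_neg at h
          have hsq : 2 * ε * (nu * ‖v i‖) ^ 2 ≤ (vtilde * ‖u i‖) ^ 2 := by
            have hlhs : (0:ℝ) ≤ Real.sqrt (2*ε) * nu * ‖v i‖ := by positivity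
            have := mul_self_le_mul_self hlhs h.le
            have hs2 : Real.sqrt (2*ε) * Real.sqrt (2*ε) = 2 * ε :=
              Real.mul_self_sqrt (by linarith)
            nlinarith
          have hTle : (‖v i‖ * nu ^ 2 / ‖u i‖) ^ 2 ≤ nu ^ 2 * vtilde ^ 2 / (2 * ε) := by
            rw [div_pow, div_le_div_iff₀ (by positivity) (by linarith)]
            nlinarith
          exact mul_le_mul_of_nonneg_left hTle (abs_nonneg _)
      calc (∑ i, if vtilde * ‖u i‖ ≤ Real.sqrt (2 * ε) * nu * ‖v i‖ then (0:ℝ)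
          else |ptilde i - ‖u i‖ ^ 2 / nu ^ 2| * (‖v i‖ * nu ^ 2 / ‖u i‖) ^ 2)
          ≤ ∑ i, |ptilde i - ‖u i‖ ^ 2 / nu ^ 2| * (nu ^ 2 * vtilde ^ 2 / (2 * ε)) :=
            Finset.sum_le_sum (fun i _ => hkey i)
        _ = (∑ i, |ptilde i - ‖u i‖ ^ 2 / nu ^ 2|) * (nu ^ 2 * vtilde ^ 2 / (2 * ε)) := by
            rw [Finset.sum_mul]
        _ ≤ (2 * ε) * (nu ^ 2 * vtilde ^ 2 / (2 * ε)) := by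
            apply mul_le_mul_of_nonneg_right (by linarith) (by positivity)
        _ = nu ^ 2 * vtilde ^ 2 := by field_simp
  -- put it together
  have hmain : EX2 ≤ (∑ i, nu ^ 2 * ‖v i‖ ^ 2) +
      (∑ i, if vtilde * ‖u i‖ ≤ Real.sqrt (2 * ε) * nu * ‖v i‖ then (0:ℝ)
        else |ptilde i - ‖u i‖ ^ 2 / nu ^ 2| * (‖v i‖ * nu ^ 2 / ‖u i‖) ^ 2) := by
    rw [hEX2, ← Finset.sum_add_distrib]
    exact Finset.sum_le_sum (fun i _ => hterm i)
  have hfirst : (∑ i, nu ^ 2 * ‖v i‖ ^ 2) ≤ nu ^ 2 * vtilde ^ 2 := by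
    rw [← Finset.mul_sum]
    exact mul_le_mul_of_nonneg_left hvsum (by positivity)
  linarith
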